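/- For p > 3 prime, there is no injective homomorphism of F_p[GL_2(F_p)]-modules from V_p into V_{2p-1}. -/

import Mathlib

open MvPolynomial

/-- The action of a matrix `g = [[a,b],[c,d]]` on `F[X, Y]`, determined by
`g · X = aX + cY`, `g · Y = bX + dY`. -/
noncomputable def matAct {F : Type*} [CommRing F] (g : Matrix (Fin 2) (Fin 2) F) :
    MvPolynomial (Fin 2) F →ₐ[F] MvPolynomial (Fin 2) F :=
  aeval (fun i => ∑ j, C (g j i) * X j)

namespace NoEmbedAux

open Finsupp

variable {R : Type*} [CommRing R]

lemma matAct_X (g : Matrix (Fin 2) (Fin 2) R) (i : Fin 2) :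
    matAct g (X i) = C (g 0 i) * X 0 + C (g 1 i) * X 1 := by
  simp [matAct, Fin.sum_univ_two]

lemma mono_eq (a b : ℕ) (c : R) :
    C c * X (0 : Fin 2) ^ a * X 1 ^ b = monomial (single (0 : Fin 2) a + single 1 b) c := by
  rw [X_pow_eq_monomial, X_pow_eq_monomial, C_apply, monomial_mul, monomial_mul]
  simp

lemma pair_eq {a b c d : ℕ} :
    single (0 : Fin 2) a + single 1 b = single 0 c + single 1 d ↔ a = c ∧ b = d := by
  constructor
  · intro h
    constructor
    · have := DFunLike.congr_fun h 0; simpa using this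
    · have := DFunLike.congr_fun h 1; simpa using this
  · rintro ⟨rfl, rfl⟩; rfl

lemma fin2_finsupp (d : Fin 2 →₀ ℕ) : d = single 0 (d 0) + single 1 (d 1) := by
  ext i
  fin_cases i <;> simp

lemma degree_fin2 (d : Fin 2 →₀ ℕ) : d.degree = d 0 + d 1 := by
  rw [degree_eq_weight_one]
  simp [weight, linearCombination, Finsupp.sum_fintype, Fin.sum_univ_two]

lemma matAct_mono (g : Matrix (Fin 2) (Fin 2) R) (a b : ℕ) (c : R) :
    matAct g (monomial (single (0 : Fin 2) a + single 1 b) c) =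
      C c * (C (g 0 0) * X 0 + C (g 1 0) * X 1) ^ a *
        (C (g 0 1) * X 0 + C (g 1 1) * X 1) ^ b := by
  rw [← mono_eq, map_mul, map_mul, map_pow, map_pow, matAct_X, matAct_X]
  simp [matAct]

lemma matAct_diag_mono (u v : R) (a b : ℕ) (c : R) :
    matAct (Matrix.diagonal ![u, v]) (monomial (single (0 : Fin 2) a + single 1 b) c) =
      monomial (single (0 : Fin 2) a + single 1 b) (u ^ a * v ^ b * c) := by
  rw [matAct_mono]
  have h01 : Matrix.diagonal ![u, v] 1 0 = 0 := Matrix.diagonal_apply_ne _ (by decide)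
  have h10 : Matrix.diagonal ![u, v] 0 1 = 0 := Matrix.diagonal_apply_ne _ (by decide)
  rw [h01, h10]
  simp only [Matrix.diagonal_apply_eq, Matrix.cons_val_zero, Matrix.cons_val_one,
    Matrix.head_cons, map_zero, zero_mul, add_zero, zero_add, mul_pow, ← C_pow, ← mono_eq]
  simp only [C_mul]
  ring

lemma coeff_matAct_diag (u v : R) (φ : MvPolynomial (Fin 2) R) (d : Fin 2 →₀ ℕ) :
    coeff d (matAct (Matrix.diagonal ![u, v]) φ) = u ^ d 0 * v ^ d 1 * coeff d φ := by
  induction φ using MvPolynomial.induction_on' with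
  | monomial e c =>
    rw [show e = single 0 (e 0) + single 1 (e 1) from fin2_finsupp e,
      matAct_diag_mono, coeff_monomial, coeff_monomial]
    split
    · rename_i h
      have h0 := DFunLike.congr_fun h 0
      have h1 := DFunLike.congr_fun h 1
      simp only [Finsupp.coe_add, Pi.add_apply, Finsupp.single_apply] at h0 h1
      simp at h0 h1
      rw [h0, h1]
    · ring
  | add φ ψ hφ hψ => simp only [map_add, coeff_add, hφ, hψ]; ring

lemma coeff_mono_pair (i j a b : ℕ) (r : R) :
    coeff (single (0 : Fin 2) i + single 1 j) (monomial (single (0 : Fin 2) a + single 1 b) r) =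
      if a = i ∧ b = j then r else 0 := by
  rw [coeff_monomial]
  exact if_congr pair_eq rfl rfl

lemma cmp_pos (i j : ℕ) (r : R) :
    coeff (single (0 : Fin 2) i + single 1 j) (monomial (single (0 : Fin 2) i + single 1 j) r) =
      r := by
  rw [coeff_mono_pair, if_pos ⟨rfl, rfl⟩]

lemma cmp_neg (i j a b : ℕ) (r : R) (h : ¬(a = i ∧ b = j)) :
    coeff (single (0 : Fin 2) i + single 1 j) (monomial (single (0 : Fin 2) a + single 1 b) r) =
      0 := by
  rw [coeff_mono_pair, if_neg h]

lemma sum_coeff (p : ℕ) (hp : 5 ≤ p) (c : ℕ → R) (i j : ℕ) (hij : i + j = 2 * p - 1) :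
    coeff (single (0 : Fin 2) i + single 1 j)
      (∑ k ∈ Finset.range p,
        (monomial (single (0 : Fin 2) (p + k) + single 1 (p - 1 - k)) (c k) +
          monomial (single (0 : Fin 2) k + single 1 (2 * p - 1 - k)) (c k))) =
      (if p ≤ i then c (i - p) else 0) + (if i ≤ p - 1 then c i else 0) := by
  rw [coeff_sum]
  simp only [coeff_add, coeff_mono_pair]
  rw [Finset.sum_add_distrib]
  congr 1
  · by_cases hpi : p ≤ i
    · rw [Finset.sum_eq_single_of_mem (i - p) (by simp; omega)
        (fun b _ hb => if_neg (by omega)), if_pos ⟨by omega, by omega⟩, if_pos hpi]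
    · rw [Finset.sum_eq_zero (fun b _ => if_neg (by omega)), if_neg hpi]
  · by_cases hip : i ≤ p - 1
    · rw [Finset.sum_eq_single_of_mem i (by simp; omega)
        (fun b _ hb => if_neg (fun hc => hb hc.1)), if_pos ⟨rfl, by omega⟩, if_pos hip]
    · rw [Finset.sum_eq_zero
        (fun b hb => if_neg (fun hc => by have := Finset.mem_range.mp hb; omega)),
        if_neg hip]

lemma matAct_w_mono (a b : ℕ) (c : R) :
    matAct !![0, 1; 1, 0] (monomial (single (0 : Fin 2) a + single 1 b) c) =
      monomial (single (0 : Fin 2) b + single 1 a) c := by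
  rw [matAct_mono]
  norm_num
  rw [← mono_eq]
  ring

lemma matAct_uw_mono (a b : ℕ) (c : R) :
    matAct !![1, 1; 1, 0] (monomial (single (0 : Fin 2) a + single 1 b) c) =
      C c * (X 0 + X 1) ^ a * X 0 ^ b := by
  rw [matAct_mono]
  norm_num

end NoEmbedAux

open NoEmbedAux Finsupp

/-- For `p > 3` prime there is no injective homomorphism of
`F_p[GL₂(F_p)]`-modules from `V_p = Sym^p F_p²` into `V_{2p-1} = Sym^{2p-1} F_p²`. -/
theorem no_embedding_Vp_into_V2pm1 (p : ℕ) [Fact p.Prime] (hp : 3 < p) :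
    ¬ ∃ T : MvPolynomial (Fin 2) (ZMod p) →ₗ[ZMod p] MvPolynomial (Fin 2) (ZMod p),
      (∀ f ∈ homogeneousSubmodule (Fin 2) (ZMod p) p,
        T f ∈ homogeneousSubmodule (Fin 2) (ZMod p) (2 * p - 1)) ∧
      (∀ f ∈ homogeneousSubmodule (Fin 2) (ZMod p) p, T f = 0 → f = 0) ∧
      (∀ g : GL (Fin 2) (ZMod p), ∀ f ∈ homogeneousSubmodule (Fin 2) (ZMod p) p,
        T (matAct (↑g : Matrix (Fin 2) (Fin 2) (ZMod p)) f) =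
          matAct (↑g : Matrix (Fin 2) (Fin 2) (ZMod p)) (T f)) := by
  rintro ⟨T, hhom, hinj, hequiv⟩
  have hpp : p.Prime := Fact.out
  have hp4 : p ≠ 4 := by rintro rfl; norm_num at hpp
  have hp5 : 5 ≤ p := by omega
  have hXp : (X 0 ^ p : MvPolynomial (Fin 2) (ZMod p)) ∈
      homogeneousSubmodule (Fin 2) (ZMod p) p := by
    rw [mem_homogeneousSubmodule]
    simpa using (isHomogeneous_X (ZMod p) (0 : Fin 2)).pow p
  have hq : (T (X 0 ^ p)).IsHomogeneous (2 * p - 1) := by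
    have := hhom _ hXp; rwa [mem_homogeneousSubmodule] at this
  have hdeg : ∀ d : Fin 2 →₀ ℕ, coeff d (T (X 0 ^ p)) ≠ 0 → d 0 + d 1 = 2 * p - 1 := by
    intro d hd
    by_contra h
    exact hd (hq.coeff_eq_zero (by rw [degree_fin2]; exact h))
  -- action of diagonal matrices
  have hdiag : ∀ a : (ZMod p)ˣ,
      matAct (Matrix.diagonal ![(a : ZMod p), 1]) (T (X 0 ^ p)) =
        C (a : ZMod p) * T (X 0 ^ p) := by
    intro a
    have hdet : (Matrix.diagonal ![(a : ZMod p), 1]).det ≠ 0 := by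
      rw [Matrix.det_diagonal, Fin.prod_univ_two]
      simp
    have hg := hequiv (Matrix.GeneralLinearGroup.mkOfDetNeZero _ hdet) _ hXp
    have hco : ((Matrix.GeneralLinearGroup.mkOfDetNeZero _ hdet :
        GL (Fin 2) (ZMod p)) : Matrix (Fin 2) (Fin 2) (ZMod p)) =
        Matrix.diagonal ![(a : ZMod p), 1] := rfl
    rw [hco] at hg
    have hDX : matAct (Matrix.diagonal ![(a : ZMod p), 1]) (X 0 ^ p : MvPolynomial (Fin 2) (ZMod p))
        = C (a : ZMod p) * X 0 ^ p := by
      rw [map_pow, matAct_X]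
      have h10 : Matrix.diagonal ![(a : ZMod p), 1] 1 0 = 0 :=
        Matrix.diagonal_apply_ne _ (by decide)
      have h00 : Matrix.diagonal ![(a : ZMod p), 1] 0 0 = (a : ZMod p) :=
        Matrix.diagonal_apply_eq _ _
      rw [h10, h00]
      rw [map_zero, zero_mul, add_zero, mul_pow, ← C_pow, ZMod.pow_card]
    rw [hDX, C_mul', map_smul] at hg
    exact hg.symm.trans C_mul'.symm
  -- weight space decomposition
  obtain ⟨g0, hg0⟩ := IsCyclic.exists_generator (α := (ZMod p)ˣ)
  have horder : orderOf g0 = p - 1 := by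
    rw [orderOf_eq_card_of_forall_mem_zpowers hg0, Nat.card_eq_fintype_card, ZMod.card_units]
  have hwt : ∀ d : Fin 2 →₀ ℕ, coeff d (T (X 0 ^ p)) ≠ 0 →
      d 0 = 1 ∨ d 0 = p ∨ d 0 = 2 * p - 1 := by
    intro d hd
    have h1 : ∀ a : (ZMod p)ˣ, (a : ZMod p) ^ (d 0) = a := by
      intro a
      have hc := congrArg (coeff d) (hdiag a)
      rw [coeff_matAct_diag, coeff_C_mul] at hc
      have h2 : (a : ZMod p) ^ (d 0) * 1 ^ (d 1) = a := mul_right_cancel₀ hd hc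
      simpa using h2
    have hg0pow : g0 ^ (d 0) = g0 ^ 1 := by
      apply Units.ext
      rw [Units.val_pow_eq_pow_val, Units.val_pow_eq_pow_val, pow_one]
      exact h1 g0
    have hmod : d 0 ≡ 1 [MOD p - 1] := by
      have := pow_eq_pow_iff_modEq.mp hg0pow
      rwa [horder] at this
    have hle : d 0 ≤ 2 * p - 1 := by have := hdeg d hd; omega
    have hm : d 0 % (p - 1) = 1 := by
      have h := hmod
      unfold Nat.ModEq at h
      rwa [Nat.mod_eq_of_lt (show 1 < p - 1 from by omega)] at h
    have heq := Nat.div_add_mod (d 0) (p - 1)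
    rw [hm] at heq
    have ht2 : d 0 / (p - 1) ≤ 2 := by
      by_contra hc
      push_neg at hc
      have : (p - 1) * 3 ≤ (p - 1) * (d 0 / (p - 1)) := Nat.mul_le_mul_left _ hc
      omega
    set t := d 0 / (p - 1) with htdef
    interval_cases t <;> omega
  -- the three relevant coefficients
  set A := coeff (single (0 : Fin 2) 1 + single 1 (2 * p - 2)) (T (X 0 ^ p)) with hAdef
  set B := coeff (single (0 : Fin 2) p + single 1 (p - 1)) (T (X 0 ^ p)) with hBdef
  set G := coeff (single (0 : Fin 2) (2 * p - 1) + single 1 0) (T (X 0 ^ p)) with hGdef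
  -- pairwise disequalities of the three exponent vectors
  have n21 : single (0 : Fin 2) p + single 1 (p - 1) ≠ single 0 1 + single 1 (2 * p - 2) := by
    rw [Ne, pair_eq]; omega
  have n31 : single (0 : Fin 2) (2 * p - 1) + single 1 0 ≠ single 0 1 + single 1 (2 * p - 2) := by
    rw [Ne, pair_eq]; omega
  have n12 : single (0 : Fin 2) 1 + single 1 (2 * p - 2) ≠ single 0 p + single 1 (p - 1) := by
    rw [Ne, pair_eq]; omega
  have n32 : single (0 : Fin 2) (2 * p - 1) + single 1 0 ≠ single 0 p + single 1 (p - 1) := by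
    rw [Ne, pair_eq]; omega
  have n13 : single (0 : Fin 2) 1 + single 1 (2 * p - 2) ≠ single 0 (2 * p - 1) + single 1 0 := by
    rw [Ne, pair_eq]; omega
  have n23 : single (0 : Fin 2) p + single 1 (p - 1) ≠ single 0 (2 * p - 1) + single 1 0 := by
    rw [Ne, pair_eq]; omega
  have hq3 : T (X 0 ^ p) =
      monomial (single (0 : Fin 2) 1 + single 1 (2 * p - 2)) A +
      monomial (single (0 : Fin 2) p + single 1 (p - 1)) B +
      monomial (single (0 : Fin 2) (2 * p - 1) + single 1 0) G := by
    apply MvPolynomial.ext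
    intro d
    simp only [coeff_add, coeff_monomial]
    by_cases h1 : single (0 : Fin 2) 1 + single 1 (2 * p - 2) = d
    · rw [if_pos h1, ← h1, if_neg n21, if_neg n31, hAdef, h1]; ring
    · by_cases h2 : single (0 : Fin 2) p + single 1 (p - 1) = d
      · rw [if_neg h1, if_pos h2, ← h2, if_neg n32, hBdef, h2]; ring
      · by_cases h3 : single (0 : Fin 2) (2 * p - 1) + single 1 0 = d
        · rw [if_neg h1, if_neg h2, if_pos h3, hGdef, h3]; ring
        · rw [if_neg h1, if_neg h2, if_neg h3]
          by_contra hne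
          have hd : coeff d (T (X 0 ^ p)) ≠ 0 := by simpa using hne
          have hsum := hdeg d hd
          rcases hwt d hd with h | h | h
          · exact h1 ((fin2_finsupp d).trans (pair_eq.mpr ⟨by omega, by omega⟩)).symm
          · exact h2 ((fin2_finsupp d).trans (pair_eq.mpr ⟨by omega, by omega⟩)).symm
          · exact h3 ((fin2_finsupp d).trans (pair_eq.mpr ⟨by omega, by omega⟩)).symm
  -- the swap matrix and the matrix uw
  have hdetw : (!![0, 1; 1, 0] : Matrix (Fin 2) (Fin 2) (ZMod p)).det ≠ 0 := by
    rw [Matrix.det_fin_two_of]; simp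
  have hdetuw : (!![1, 1; 1, 0] : Matrix (Fin 2) (Fin 2) (ZMod p)).det ≠ 0 := by
    rw [Matrix.det_fin_two_of]; simp
  have hTw : T (X 1 ^ p) = matAct (!![0, 1; 1, 0] : Matrix (Fin 2) (Fin 2) (ZMod p))
      (T (X 0 ^ p)) := by
    have hg := hequiv (Matrix.GeneralLinearGroup.mkOfDetNeZero _ hdetw) _ hXp
    have hco : ((Matrix.GeneralLinearGroup.mkOfDetNeZero _ hdetw :
        GL (Fin 2) (ZMod p)) : Matrix (Fin 2) (Fin 2) (ZMod p)) = !![0, 1; 1, 0] := rfl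
    rw [hco] at hg
    rwa [show matAct (!![0, 1; 1, 0] : Matrix (Fin 2) (Fin 2) (ZMod p)) (X 0 ^ p) = X 1 ^ p by
      rw [map_pow, matAct_X]; norm_num] at hg
  have hTuw : T (X 0 ^ p) + T (X 1 ^ p) =
      matAct (!![1, 1; 1, 0] : Matrix (Fin 2) (Fin 2) (ZMod p)) (T (X 0 ^ p)) := by
    have hg := hequiv (Matrix.GeneralLinearGroup.mkOfDetNeZero _ hdetuw) _ hXp
    have hco : ((Matrix.GeneralLinearGroup.mkOfDetNeZero _ hdetuw :
        GL (Fin 2) (ZMod p)) : Matrix (Fin 2) (Fin 2) (ZMod p)) = !![1, 1; 1, 0] := rfl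
    rw [hco] at hg
    rw [show matAct (!![1, 1; 1, 0] : Matrix (Fin 2) (Fin 2) (ZMod p)) (X 0 ^ p)
        = X 0 ^ p + X 1 ^ p by
      rw [map_pow, matAct_X]
      norm_num
      rw [add_pow_char], map_add] at hg
    exact hg
  have hE0 : T (X 0 ^ p) + matAct (!![0, 1; 1, 0] : Matrix (Fin 2) (Fin 2) (ZMod p))
      (T (X 0 ^ p)) = matAct (!![1, 1; 1, 0] : Matrix (Fin 2) (Fin 2) (ZMod p))
      (T (X 0 ^ p)) := by
    rw [← hTw]; exact hTuw
  -- expand both sides into monomials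
  rw [hq3] at hE0
  simp only [map_add, matAct_w_mono, matAct_uw_mono] at hE0
  rw [show (C A : MvPolynomial (Fin 2) (ZMod p)) * (X 0 + X 1) ^ 1 * X 0 ^ (2 * p - 2) =
      monomial (single (0 : Fin 2) (2 * p - 1) + single 1 0) A +
      monomial (single (0 : Fin 2) (2 * p - 2) + single 1 1) A by
    rw [← mono_eq, ← mono_eq, pow_one, show 2 * p - 1 = (2 * p - 2) + 1 from by omega]
    ring] at hE0
  rw [show (C B : MvPolynomial (Fin 2) (ZMod p)) * (X 0 + X 1) ^ p * X 0 ^ (p - 1) =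
      monomial (single (0 : Fin 2) (2 * p - 1) + single 1 0) B +
      monomial (single (0 : Fin 2) (p - 1) + single 1 p) B by
    rw [← mono_eq, ← mono_eq, add_pow_char, show 2 * p - 1 = p + (p - 1) from by omega]
    ring] at hE0
  rw [show (C G : MvPolynomial (Fin 2) (ZMod p)) * (X 0 + X 1) ^ (2 * p - 1) * X 0 ^ 0 =
      ∑ k ∈ Finset.range p,
        (monomial (single (0 : Fin 2) (p + k) + single 1 (p - 1 - k))
            (G * ((p - 1).choose k : ZMod p)) +
          monomial (single (0 : Fin 2) k + single 1 (2 * p - 1 - k))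
            (G * ((p - 1).choose k : ZMod p))) by
    rw [pow_zero, mul_one, show 2 * p - 1 = p + (p - 1) from by omega, pow_add, add_pow_char,
      add_pow, show p - 1 + 1 = p from by omega, ← mul_assoc, Finset.mul_sum]
    apply Finset.sum_congr rfl
    intro k hk
    have hk' : k ≤ p - 1 := by have := Finset.mem_range.mp hk; omega
    rw [← C_eq_coe_nat, ← mono_eq, ← mono_eq, show p + (p - 1) - k = p + (p - 1 - k) from by omega,
      C_mul]
    ring] at hE0
  -- extract the three coefficient relations
  have hGA : A = G * ((p - 1).choose 1 : ZMod p) := by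
    have h := congrArg (coeff (single (0 : Fin 2) 1 + single 1 (2 * p - 2))) hE0
    simp only [coeff_add] at h
    rw [cmp_pos,
      cmp_neg 1 (2 * p - 2) p (p - 1) B (by omega),
      cmp_neg 1 (2 * p - 2) (2 * p - 1) 0 G (by omega),
      cmp_neg 1 (2 * p - 2) (2 * p - 2) 1 A (by omega),
      cmp_neg 1 (2 * p - 2) (p - 1) p B (by omega),
      cmp_neg 1 (2 * p - 2) 0 (2 * p - 1) G (by omega),
      cmp_neg 1 (2 * p - 2) (2 * p - 1) 0 A (by omega),
      cmp_neg 1 (2 * p - 2) (2 * p - 1) 0 B (by omega),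
      sum_coeff p hp5 _ 1 (2 * p - 2) (by omega),
      if_neg (show ¬ p ≤ 1 from by omega), if_pos (show (1 : ℕ) ≤ p - 1 from by omega)] at h
    simpa using h
  have hGB : B = G * ((p - 1).choose 0 : ZMod p) := by
    have h := congrArg (coeff (single (0 : Fin 2) p + single 1 (p - 1))) hE0
    simp only [coeff_add] at h
    rw [cmp_neg p (p - 1) 1 (2 * p - 2) A (by omega),
      cmp_pos,
      cmp_neg p (p - 1) (2 * p - 1) 0 G (by omega),
      cmp_neg p (p - 1) (2 * p - 2) 1 A (by omega),
      cmp_neg p (p - 1) (p - 1) p B (by omega),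
      cmp_neg p (p - 1) 0 (2 * p - 1) G (by omega),
      cmp_neg p (p - 1) (2 * p - 1) 0 A (by omega),
      cmp_neg p (p - 1) (2 * p - 1) 0 B (by omega),
      sum_coeff p hp5 _ p (p - 1) (by omega),
      if_pos (show p ≤ p from le_refl p), if_neg (show ¬ p ≤ p - 1 from by omega)] at h
    rw [Nat.sub_self] at h
    simpa using h
  have hG0 : G = 0 := by
    have h := congrArg (coeff (single (0 : Fin 2) (p + 1) + single 1 (p - 2))) hE0
    simp only [coeff_add] at h
    rw [cmp_neg (p + 1) (p - 2) 1 (2 * p - 2) A (by omega),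
      cmp_neg (p + 1) (p - 2) p (p - 1) B (by omega),
      cmp_neg (p + 1) (p - 2) (2 * p - 1) 0 G (by omega),
      cmp_neg (p + 1) (p - 2) (2 * p - 2) 1 A (by omega),
      cmp_neg (p + 1) (p - 2) (p - 1) p B (by omega),
      cmp_neg (p + 1) (p - 2) 0 (2 * p - 1) G (by omega),
      cmp_neg (p + 1) (p - 2) (2 * p - 1) 0 A (by omega),
      cmp_neg (p + 1) (p - 2) (2 * p - 1) 0 B (by omega),
      sum_coeff p hp5 _ (p + 1) (p - 2) (by omega),
      if_pos (show p ≤ p + 1 from by omega), if_neg (show ¬ p + 1 ≤ p - 1 from by omega),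
      show p + 1 - p = 1 from by omega] at h
    have hchoose : (((p - 1).choose 1 : ℕ) : ZMod p) = -1 := by
      rw [Nat.choose_one_right, Nat.cast_sub (by omega), ZMod.natCast_self, Nat.cast_one,
        zero_sub]
    rw [hchoose] at h
    have hsim : G * (-1) = 0 := by simpa using h.symm
    rwa [mul_neg_one, neg_eq_zero] at hsim
  have hA0 : A = 0 := by rw [hGA, hG0, zero_mul]
  have hB0 : B = 0 := by rw [hGB, hG0, zero_mul]
  have hq0 : T (X 0 ^ p) = 0 := by
    rw [hq3, hA0, hB0, hG0]
    simp
  have hX0 : (X 0 ^ p : MvPolynomial (Fin 2) (ZMod p)) = 0 := hinj _ hXp hq0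
  have hone : (1 : ZMod p) = 0 := by
    have hc := congrArg (coeff (single (0 : Fin 2) p)) hX0
    rwa [X_pow_eq_monomial, coeff_monomial, if_pos rfl, coeff_zero] at hc
  exact one_ne_zero hone
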